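/- Suppose additionally that the kernel k is aperiodic (A3), that g(t) ≥ 0 for all t ∈ ℕ with ∑_{t=0}^∞ g(t) < ∞, that b satisfies the renewal equation b(t) = ∑_{s=1}^{t} k(s) b(t−s) + g(t) for all t ∈ ℕ, that ℛ₀ := ∑_{t=1}^∞ k(t) > 1, and that ρ > 1 is a real number satisfying the Euler–Lotka equation ∑_{s=1}^∞ k(s) ρ^{−s} = 1. Then ρ^{−t} b(t) → (∑_{s=0}^∞ g(s) ρ^{−s}) / (∑_{s=1}^∞ s·k(s) ρ^{−s}) as t → ∞. (Feller's Renewal Theorem, part (iii).) -/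

import Mathlib

open Filter Topology

/-- Sum over `Icc 1 j` equals sum over `range (j+1)` when `f 0 = 0`. -/
private lemma sum_Icc_one {f : ℕ → ℝ} (hf0 : f 0 = 0) (j : ℕ) :
    ∑ s ∈ Finset.Icc 1 j, f s = ∑ s ∈ Finset.range (j + 1), f s := by
  rw [Finset.sum_range_succ' f j, ← Finset.Ico_add_one_right_eq_Icc, Finset.sum_Ico_eq_sum_range]
  simp [hf0, add_comm]

private lemma summable_ite_gt {f : ℕ → ℝ} (hf : Summable f) (hnn : ∀ s, 0 ≤ f s) (n : ℕ) :
    Summable fun s => if n < s then f s else 0 := by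
  apply Summable.of_nonneg_of_le (fun s => by split <;> simp [hnn]) (fun s => ?_) hf
  split <;> simp [hnn]

/-- tail sum as a tsum of an indicator. -/
private lemma tsum_ite_gt {f : ℕ → ℝ} (hf : Summable f) (hnn : ∀ s, 0 ≤ f s) (n : ℕ) :
    ∑' s, (if n < s then f s else 0) = (∑' s, f s) - ∑ s ∈ Finset.range (n + 1), f s := by
  have h1 : Summable fun s => if n < s then f s else 0 := summable_ite_gt hf hnn n
  have h2 : Summable fun s => if n < s then 0 else f s := by
    apply Summable.of_nonneg_of_le (fun s => by split <;> simp [hnn]) (fun s => ?_) hf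
    split <;> simp [hnn]
  have hsplit : ∀ s, f s = (if n < s then f s else 0) + (if n < s then 0 else f s) := by
    intro s; split <;> ring
  have h3 : (∑' s, f s) = (∑' s, (if n < s then f s else 0)) + ∑' s, (if n < s then 0 else f s) := by
    rw [← h1.tsum_add h2]; exact tsum_congr hsplit
  have h4 : (∑' s, (if n < s then 0 else f s)) = ∑ s ∈ Finset.range (n + 1), f s := by
    rw [tsum_eq_sum (s := Finset.range (n + 1))]
    · apply Finset.sum_congr rfl; intro s hs
      simp only [Finset.mem_range] at hs; simp [Nat.lt_of_succ_le, show ¬ n < s by omega]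
    · intro s hs; simp only [Finset.mem_range] at hs; simp [show n < s by omega]
  rw [h3, h4]; ring

/-- The tail sequence `r j = 1 - (q 0 + ⋯ + q j)`. -/
private def rr (q : ℕ → ℝ) (j : ℕ) : ℝ := 1 - ∑ s ∈ Finset.range (j + 1), q s

private lemma rr_eq_tsum {q : ℕ → ℝ} (hqnn : ∀ s, 0 ≤ q s) (hq1 : HasSum q 1) (j : ℕ) :
    rr q j = ∑' s, (if j < s then q s else 0) := by
  rw [tsum_ite_gt hq1.summable hqnn, hq1.tsum_eq, rr]

private lemma rr_nonneg {q : ℕ → ℝ} (hqnn : ∀ s, 0 ≤ q s) (hq1 : HasSum q 1) (j : ℕ) :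
    0 ≤ rr q j := by
  rw [rr_eq_tsum hqnn hq1]
  exact tsum_nonneg (fun s => by split <;> simp [hqnn])

private lemma min_mul_eq_sum (q : ℕ → ℝ) (s n : ℕ) :
    ∑ j ∈ Finset.range n, (if j < s then q s else 0) = ((min s n : ℕ) : ℝ) * q s := by
  have h : (Finset.range n).filter (fun j => j < s) = Finset.range (min s n) := by
    ext j; simp only [Finset.mem_filter, Finset.mem_range, lt_min_iff]; omega
  rw [← Finset.sum_filter, h, Finset.sum_const, Finset.card_range, nsmul_eq_mul]

private lemma hasSum_rr {q : ℕ → ℝ} (hqnn : ∀ s, 0 ≤ q s) (hq1 : HasSum q 1)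
    {μ : ℝ} (hμ : HasSum (fun s : ℕ => (s : ℝ) * q s) μ) : HasSum (rr q) μ := by
  have hμnn : ∀ s : ℕ, 0 ≤ (s : ℝ) * q s := fun s => mul_nonneg (Nat.cast_nonneg s) (hqnn s)
  have hmin_summ : ∀ n : ℕ, Summable (fun s : ℕ => ((min s n : ℕ) : ℝ) * q s) := by
    intro n
    apply Summable.of_nonneg_of_le (fun s => mul_nonneg (Nat.cast_nonneg _) (hqnn s))
      (fun s => ?_) hμ.summable
    exact mul_le_mul_of_nonneg_right (Nat.cast_le.2 (min_le_left _ _)) (hqnn s)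
  -- partial sums of rr
  have key : ∀ n : ℕ, ∑ j ∈ Finset.range n, rr q j = ∑' s, ((min s n : ℕ) : ℝ) * q s := by
    intro n
    have : ∑ j ∈ Finset.range n, rr q j
        = ∑ j ∈ Finset.range n, ∑' s, (if j < s then q s else 0) :=
      Finset.sum_congr rfl fun j _ => rr_eq_tsum hqnn hq1 j
    rw [this, ← Summable.tsum_finsetSum (fun j _ => summable_ite_gt hq1.summable hqnn j)]
    exact tsum_congr fun s => min_mul_eq_sum q s n
  have hub : ∀ n : ℕ, ∑ j ∈ Finset.range n, rr q j ≤ μ := by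
    intro n
    rw [key n, ← hμ.tsum_eq]
    apply Summable.tsum_le_tsum (fun s => ?_) (hmin_summ n) hμ.summable
    exact mul_le_mul_of_nonneg_right (Nat.cast_le.2 (min_le_left _ _)) (hqnn s)
  have hsr : Summable (rr q) := summable_of_sum_range_le (rr_nonneg hqnn hq1) hub
  have hlb : ∀ n : ℕ, ∑ s ∈ Finset.range (n + 1), (s : ℝ) * q s ≤ ∑ j ∈ Finset.range n, rr q j := by
    intro n
    set A : ℕ → ℝ := fun s => (s : ℝ) * q s - ((min s n : ℕ) : ℝ) * q s with hA
    set B : ℕ → ℝ := fun s => if n < s then (s : ℝ) * q s else 0 with hB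
    have hsA : Summable A := hμ.summable.sub (hmin_summ n)
    have hsB : Summable B := summable_ite_gt hμ.summable hμnn n
    have hAB : ∀ s, A s ≤ B s := by
      intro s
      by_cases hs : n < s
      · have h1 : ((min s n : ℕ) : ℝ) * q s ≥ 0 := mul_nonneg (Nat.cast_nonneg _) (hqnn s)
        simp only [hA, hB, if_pos hs]
        linarith
      · have h2 : min s n = s := by omega
        simp only [hA, hB, if_neg hs, h2, sub_self, le_refl]
    have h3 : ∑' s, A s ≤ ∑' s, B s := Summable.tsum_le_tsum hAB hsA hsB
    have h4 : ∑' s, A s = μ - ∑ j ∈ Finset.range n, rr q j := by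
      rw [hA, hμ.summable.tsum_sub (hmin_summ n), key n, hμ.tsum_eq]
    have h5 : ∑' s, B s = μ - ∑ s ∈ Finset.range (n + 1), (s : ℝ) * q s := by
      rw [hB, tsum_ite_gt hμ.summable hμnn n, hμ.tsum_eq]
    rw [h4, h5] at h3
    linarith
  have hsq : Tendsto (fun n => ∑ s ∈ Finset.range (n + 1), (s : ℝ) * q s) atTop (𝓝 μ) :=
    hμ.tendsto_sum_nat.comp (tendsto_add_atTop_nat 1)
  have hto : Tendsto (fun n => ∑ j ∈ Finset.range n, rr q j) atTop (𝓝 μ) :=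
    tendsto_of_tendsto_of_tendsto_of_le_of_le hsq tendsto_const_nhds hlb hub
  exact (hsr.hasSum_iff_tendsto_nat).2 hto

/-- Summing the renewal equation: `∑_{j≤n} r_j a_{n-j} = ∑_{m≤n} h m`. -/
private lemma renewal_identity {q h a : ℕ → ℝ} (hq0 : q 0 = 0)
    (ha : ∀ t, a t = (∑ s ∈ Finset.Icc 1 t, q s * a (t - s)) + h t) (n : ℕ) :
    ∑ j ∈ Finset.range (n + 1), rr q j * a (n - j) = ∑ m ∈ Finset.range (n + 1), h m := by
  have E1 : ∑ m ∈ Finset.range (n + 1), a m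
      = (∑ m ∈ Finset.range (n + 1), ∑ s ∈ Finset.Icc 1 m, q s * a (m - s))
        + ∑ m ∈ Finset.range (n + 1), h m := by
    rw [← Finset.sum_add_distrib]
    exact Finset.sum_congr rfl fun m _ => ha m
  have E2 : ∑ m ∈ Finset.range (n + 1), ∑ s ∈ Finset.Icc 1 m, q s * a (m - s)
      = ∑ s ∈ Finset.Icc 1 n, ∑ m ∈ Finset.Icc s n, q s * a (m - s) := by
    apply Finset.sum_comm'
    intro m s
    simp only [Finset.mem_range, Finset.mem_Icc]
    omega
  have E3 : ∀ s ∈ Finset.Icc 1 n, ∑ m ∈ Finset.Icc s n, q s * a (m - s)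
      = ∑ i ∈ Finset.range (n + 1 - s), q s * a i := by
    intro s _
    rw [← Finset.Ico_add_one_right_eq_Icc, Finset.sum_Ico_eq_sum_range]
    exact Finset.sum_congr rfl fun i _ => by rw [Nat.add_sub_cancel_left]
  have E4 : ∑ s ∈ Finset.Icc 1 n, ∑ i ∈ Finset.range (n + 1 - s), q s * a i
      = ∑ i ∈ Finset.range (n + 1), ∑ s ∈ Finset.Icc 1 (n - i), q s * a i := by
    apply Finset.sum_comm'
    intro s i
    simp only [Finset.mem_range, Finset.mem_Icc]
    omega
  have E5 : ∀ i ∈ Finset.range (n + 1), ∑ s ∈ Finset.Icc 1 (n - i), q s * a i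
      = (1 - rr q (n - i)) * a i := by
    intro i _
    rw [← Finset.sum_mul, sum_Icc_one (by simp [hq0]) (n - i)]
    simp [rr]
  rw [E2, Finset.sum_congr rfl E3, E4, Finset.sum_congr rfl E5] at E1
  have E6 : ∑ i ∈ Finset.range (n + 1), (1 - rr q (n - i)) * a i
      = (∑ i ∈ Finset.range (n + 1), a i) - ∑ i ∈ Finset.range (n + 1), rr q (n - i) * a i := by
    rw [← Finset.sum_sub_distrib]
    exact Finset.sum_congr rfl fun i _ => by ring
  rw [E6] at E1
  have E7 : ∑ j ∈ Finset.range (n + 1), rr q j * a (n - j)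
      = ∑ i ∈ Finset.range (n + 1), rr q (n - i) * a i := by
    rw [← Finset.sum_range_reflect (fun i => rr q (n - i) * a i) (n + 1)]
    apply Finset.sum_congr rfl
    intro j hj
    simp only [Finset.mem_range] at hj
    congr 2
    omega
  rw [E7]
  linarith

/-- Convergence of growing convolution-type sums against an `ℓ¹` weight. -/
private lemma conv_tendsto {c : ℕ → ℝ} (hcnn : ∀ s, 0 ≤ c s) (hcs : Summable c)
    {C : ℝ} {u : ℕ → ℕ → ℝ} {w : ℕ → ℝ}
    (hu : ∀ i s, |u i s| ≤ C)
    (hlim : ∀ s, Tendsto (fun i => u i s) atTop (𝓝 (w s)))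
    {N : ℕ → ℕ} (hN : Tendsto N atTop atTop) :
    Tendsto (fun i => ∑ s ∈ Finset.range (N i), c s * u i s) atTop (𝓝 (∑' s, c s * w s)) := by
  have hC0 : 0 ≤ C := le_trans (abs_nonneg _) (hu 0 0)
  have hwb : ∀ s, |w s| ≤ C := fun s =>
    le_of_tendsto (hlim s).abs (Filter.Eventually.of_forall fun i => hu i s)
  have hsw : Summable fun s => c s * w s := by
    apply Summable.of_norm_bounded (hcs.mul_left C)
    intro s
    rw [Real.norm_eq_abs, abs_mul, abs_of_nonneg (hcnn s)]
    calc c s * |w s| ≤ c s * C := mul_le_mul_of_nonneg_left (hwb s) (hcnn s)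
      _ = C * c s := mul_comm _ _
  rw [Metric.tendsto_atTop]
  intro ε hε
  set Sc := ∑' s, c s with hSc
  have hSc0 : 0 ≤ Sc := tsum_nonneg hcnn
  set ε' := ε / (3 * (C + 1)) with hε'def
  have hε'0 : 0 < ε' := by positivity
  set δ := ε / (3 * (Sc + 1)) with hδdef
  have hδ0 : 0 < δ := by positivity
  obtain ⟨M, hM⟩ : ∃ M, ∑' i, c (i + M) < ε' :=
    ((tendsto_sum_nat_add c).eventually (gt_mem_nhds hε'0)).exists
  have hMnn : 0 ≤ ∑' i, c (i + M) := tsum_nonneg fun i => hcnn _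
  -- finite tails are small
  have htail : ∀ K, M ≤ K → ∑ s ∈ Finset.Ico M K, c s ≤ ε' := by
    intro K hK
    rw [Finset.sum_Ico_eq_sum_range]
    calc ∑ i ∈ Finset.range (K - M), c (M + i)
        = ∑ i ∈ Finset.range (K - M), c (i + M) :=
          Finset.sum_congr rfl fun i _ => by rw [add_comm]
      _ ≤ ∑' i, c (i + M) :=
          Summable.sum_le_tsum _ (fun i _ => hcnn _) ((summable_nat_add_iff M).2 hcs)
      _ ≤ ε' := le_of_lt hM
  -- tail of the limit series is small
  have hthird : |(∑' s, c s * w s) - ∑ s ∈ Finset.range M, c s * w s| ≤ C * ε' := by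
    have h1 := Summable.sum_add_tsum_nat_add M hsw
    have hs1 : Summable fun i => c (i + M) * w (i + M) := (summable_nat_add_iff M).2 hsw
    have h2 : |∑' i, c (i + M) * w (i + M)| ≤ C * ∑' i, c (i + M) := by
      have habs : Summable fun i => ‖c (i + M) * w (i + M)‖ := by
        simpa only [Real.norm_eq_abs] using hs1.abs
      have h0 := norm_tsum_le_tsum_norm habs
      simp only [Real.norm_eq_abs] at h0
      calc |∑' i, c (i + M) * w (i + M)| ≤ ∑' i, |c (i + M) * w (i + M)| := h0
        _ ≤ ∑' i, C * c (i + M) := by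
            apply Summable.tsum_le_tsum _ hs1.abs (((summable_nat_add_iff M).2 hcs).mul_left C)
            intro i
            rw [abs_mul, abs_of_nonneg (hcnn _)]
            calc c (i + M) * |w (i + M)| ≤ c (i + M) * C :=
                  mul_le_mul_of_nonneg_left (hwb _) (hcnn _)
              _ = C * c (i + M) := mul_comm _ _
        _ = C * ∑' i, c (i + M) := tsum_mul_left
    have h3 : (∑' s, c s * w s) - ∑ s ∈ Finset.range M, c s * w s
        = ∑' i, c (i + M) * w (i + M) := by linarith
    rw [h3]
    calc |∑' i, c (i + M) * w (i + M)| ≤ C * ∑' i, c (i + M) := h2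
      _ ≤ C * ε' := mul_le_mul_of_nonneg_left (le_of_lt hM) hC0
  have hev1 : ∀ᶠ i in atTop, ∀ s ∈ Finset.range M, |u i s - w s| < δ := by
    rw [Filter.eventually_all_finset]
    intro s _
    have := Metric.tendsto_atTop.1 (hlim s) δ hδ0
    obtain ⟨i0, hi0⟩ := this
    exact Filter.eventually_atTop.2 ⟨i0, fun i hi => by
      have := hi0 i hi; rwa [Real.dist_eq] at this⟩
  have hev2 : ∀ᶠ i in atTop, M ≤ N i := hN.eventually_ge_atTop M
  obtain ⟨i1, hi1⟩ := Filter.eventually_atTop.1 (hev1.and hev2)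
  refine ⟨i1, fun i hi => ?_⟩
  obtain ⟨h1, h2⟩ := hi1 i hi
  rw [Real.dist_eq]
  have hsplit : ∑ s ∈ Finset.range (N i), c s * u i s
      = ∑ s ∈ Finset.range M, c s * u i s + ∑ s ∈ Finset.Ico M (N i), c s * u i s := by
    rw [Finset.range_eq_Ico, Finset.range_eq_Ico]
    exact (Finset.sum_Ico_consecutive _ (Nat.zero_le M) h2).symm
  have e1 : |∑ s ∈ Finset.range M, c s * u i s - ∑ s ∈ Finset.range M, c s * w s| ≤ Sc * δ := by
    rw [← Finset.sum_sub_distrib]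
    refine (Finset.abs_sum_le_sum_abs _ _).trans ?_
    have hb : ∀ s ∈ Finset.range M, |c s * u i s - c s * w s| ≤ c s * δ := by
      intro s hs
      rw [← mul_sub, abs_mul, abs_of_nonneg (hcnn s)]
      exact mul_le_mul_of_nonneg_left (le_of_lt (h1 s hs)) (hcnn s)
    refine (Finset.sum_le_sum hb).trans ?_
    rw [← Finset.sum_mul]
    exact mul_le_mul_of_nonneg_right (Summable.sum_le_tsum _ (fun s _ => hcnn s) hcs) (le_of_lt hδ0)
  have e2 : |∑ s ∈ Finset.Ico M (N i), c s * u i s| ≤ C * ε' := by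
    refine (Finset.abs_sum_le_sum_abs _ _).trans ?_
    have hb : ∀ s ∈ Finset.Ico M (N i), |c s * u i s| ≤ c s * C := by
      intro s _
      rw [abs_mul, abs_of_nonneg (hcnn s)]
      exact mul_le_mul_of_nonneg_left (hu i s) (hcnn s)
    refine (Finset.sum_le_sum hb).trans ?_
    rw [← Finset.sum_mul]
    calc (∑ s ∈ Finset.Ico M (N i), c s) * C ≤ ε' * C :=
          mul_le_mul_of_nonneg_right (htail _ h2) hC0
      _ = C * ε' := mul_comm _ _
  have etot : |∑ s ∈ Finset.range (N i), c s * u i s - ∑' s, c s * w s| ≤ Sc * δ + 2 * (C * ε') := by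
    rw [hsplit]
    have : ∑ s ∈ Finset.range M, c s * u i s + ∑ s ∈ Finset.Ico M (N i), c s * u i s
        - ∑' s, c s * w s
        = (∑ s ∈ Finset.range M, c s * u i s - ∑ s ∈ Finset.range M, c s * w s)
          + (∑ s ∈ Finset.Ico M (N i), c s * u i s)
          - ((∑' s, c s * w s) - ∑ s ∈ Finset.range M, c s * w s) := by ring
    rw [this]
    calc _ ≤ |(∑ s ∈ Finset.range M, c s * u i s - ∑ s ∈ Finset.range M, c s * w s)
          + (∑ s ∈ Finset.Ico M (N i), c s * u i s)|
          + |(∑' s, c s * w s) - ∑ s ∈ Finset.range M, c s * w s| := abs_sub _ _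
      _ ≤ _ := by
          have := abs_add_le (∑ s ∈ Finset.range M, c s * u i s - ∑ s ∈ Finset.range M, c s * w s)
            (∑ s ∈ Finset.Ico M (N i), c s * u i s)
          linarith [e1, e2, hthird]
  have harith : Sc * δ + 2 * (C * ε') < ε := by
    have hd : (0:ℝ) < 3 * (Sc + 1) := by positivity
    have hd2 : (0:ℝ) < 3 * (C + 1) := by positivity
    have k1 : Sc * δ < ε / 3 := by
      have e : Sc * δ = Sc * ε / (3 * (Sc + 1)) := by rw [hδdef]; ring
      rw [e, div_lt_div_iff₀ hd (by norm_num : (0:ℝ) < 3)]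
      nlinarith
    have k2 : C * ε' ≤ ε / 3 := by
      have e : C * ε' = C * ε / (3 * (C + 1)) := by rw [hε'def]; ring
      rw [e, div_le_div_iff₀ hd2 (by norm_num : (0:ℝ) < 3)]
      nlinarith
    linarith
  linarith [etot, harith]

/-- If a set of naturals has no common divisor `> 1` (and a nonzero element), the additive
submonoid it generates contains all sufficiently large naturals. -/
private lemma semigroup_cofinite {S : Set ℕ} (hne : ∃ s ∈ S, s ≠ 0)
    (hgcd : ∀ p : ℕ, 1 < p → ∃ s ∈ S, ¬ p ∣ s) :
    ∃ N, ∀ n, N ≤ n → n ∈ AddSubmonoid.closure S := by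
  classical
  -- the subgroup of ℤ generated by S
  set H : AddSubgroup ℤ := AddSubgroup.closure ((↑) '' S : Set ℤ) with hH
  obtain ⟨gg, hgg⟩ := Int.subgroup_cyclic H
  set d := gg.natAbs with hd
  have hdvd : ∀ s ∈ S, d ∣ s := by
    intro s hs
    have h1 : (s : ℤ) ∈ H := AddSubgroup.subset_closure ⟨s, hs, rfl⟩
    rw [hgg, AddSubgroup.mem_closure_singleton] at h1
    obtain ⟨n, hn⟩ := h1
    have : gg ∣ (s : ℤ) := Dvd.intro_left n (by rw [← hn]; simp [smul_eq_mul])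
    exact Int.natCast_dvd_natCast.mp (Int.natAbs_dvd.mpr this)
  have hd1 : d = 1 := by
    rcases Nat.lt_or_ge d 2 with h | h
    · interval_cases d
      · obtain ⟨s, hs, hs0⟩ := hne
        exact absurd (Nat.eq_zero_of_zero_dvd (hdvd s hs)) hs0
      · rfl
    · obtain ⟨s, hs, hnd⟩ := hgcd d h
      exact absurd (hdvd s hs) hnd
  -- the difference subgroup
  set T : AddSubgroup ℤ :=
    { carrier := {z | ∃ x ∈ AddSubmonoid.closure S, ∃ y ∈ AddSubmonoid.closure S,
        z = (x : ℤ) - (y : ℤ)},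
      zero_mem' := ⟨0, AddSubmonoid.zero_mem _, 0, AddSubmonoid.zero_mem _, by simp⟩,
      add_mem' := by
        rintro z1 z2 ⟨x1, hx1, y1, hy1, rfl⟩ ⟨x2, hx2, y2, hy2, rfl⟩
        exact ⟨x1 + x2, AddSubmonoid.add_mem _ hx1 hx2, y1 + y2,
          AddSubmonoid.add_mem _ hy1 hy2, by push_cast; ring⟩
      neg_mem' := by
        rintro z ⟨x, hx, y, hy, rfl⟩
        exact ⟨y, hy, x, hx, by ring⟩ } with hT
  have hHT : H ≤ T := by
    rw [hH]
    apply AddSubgroup.closure_le T |>.mpr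
    rintro z ⟨s, hs, rfl⟩
    exact ⟨s, AddSubmonoid.subset_closure hs, 0, AddSubmonoid.zero_mem _, by simp⟩
  have h1H : (1 : ℤ) ∈ H := by
    rw [hgg, AddSubgroup.mem_closure_singleton]
    have : gg = 1 ∨ gg = -1 := Int.natAbs_eq_iff.mp (by simpa using hd1) |>.imp (by simp) (by simp)
    refine ⟨gg, ?_⟩
    rcases this with h | h <;> simp [h, smul_eq_mul]
  obtain ⟨x, hx, y, hy, hxy⟩ := hHT h1H
  have hxy' : x = y + 1 := by omega
  -- Frobenius-style argument: everything ≥ y*y is in the closure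
  refine ⟨y * y, fun n hn => ?_⟩
  rcases Nat.eq_zero_or_pos y with hy0 | hy0
  · have hx1 : x = 1 := by omega
    have : n = n • x := by rw [hx1, smul_eq_mul, mul_one]
    rw [this]
    exact AddSubmonoid.nsmul_mem (AddSubmonoid.closure S) hx n
  · set r := n % y with hr
    set qq := n / y with hq
    have h1 : n = y * qq + r := (Nat.div_add_mod n y).symm
    have h2 : r < y := Nat.mod_lt n hy0
    have h3 : y ≤ qq := (Nat.le_div_iff_mul_le hy0).mpr (by nlinarith)
    have h4 : n = (qq - r) • y + r • x := by
      simp only [smul_eq_mul]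
      have h5 : r * y ≤ qq * y := Nat.mul_le_mul_right _ (by omega)
      have h1' : n = qq * y + r := by rw [h1, mul_comm]
      rw [hxy', Nat.sub_mul, Nat.mul_succ]
      omega
    rw [h4]
    exact AddSubmonoid.add_mem _ (AddSubmonoid.nsmul_mem _ hy _) (AddSubmonoid.nsmul_mem _ hx _)

/-- The core of the renewal theorem: along the limsup, `μ · limsup a = G`. -/
private lemma peak {q : ℕ → ℝ} (hq0 : q 0 = 0) (hqnn : ∀ s, 0 ≤ q s) (hq1 : HasSum q 1)
    {μ : ℝ} (hμ : HasSum (fun s : ℕ => (s : ℝ) * q s) μ)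
    {N0 : ℕ} (hsemi : ∀ n, N0 ≤ n → n ∈ AddSubmonoid.closure {s : ℕ | q s ≠ 0})
    {a h : ℕ → ℝ} {C G : ℝ} (hbd : ∀ t, |a t| ≤ C)
    (ha : ∀ t, a t = (∑ s ∈ Finset.Icc 1 t, q s * a (t - s)) + h t)
    (hh0 : Tendsto h atTop (𝓝 0))
    (hH : Tendsto (fun n => ∑ m ∈ Finset.range (n + 1), h m) atTop (𝓝 G)) :
    μ * limsup a atTop = G := by
  classical
  have hC0 : 0 ≤ C := le_trans (abs_nonneg _) (hbd 0)
  set lam := limsup a atTop with hlam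
  have hbdd1 : IsBoundedUnder (· ≤ ·) atTop a :=
    ⟨C, Filter.eventually_map.2 (Filter.Eventually.of_forall fun t => (abs_le.1 (hbd t)).2)⟩
  have hbdd2 : IsBoundedUnder (· ≥ ·) atTop a :=
    ⟨-C, Filter.eventually_map.2 (Filter.Eventually.of_forall fun t => (abs_le.1 (hbd t)).1)⟩
  have hcob : IsCoboundedUnder (· ≤ ·) atTop a := hbdd2.isCoboundedUnder_flip
  -- a subsequence converging to the limsup
  have hfreq : ∀ n : ℕ, ∃ᶠ i in atTop, |a i - lam| < 1 / (n + 1) := by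
    intro n
    have hp : (0:ℝ) < 1 / (n + 1) := by positivity
    have h1 : ∃ᶠ i in atTop, lam - 1 / (n + 1) < a i :=
      Filter.frequently_lt_of_lt_limsup hcob (by linarith)
    have h2 : ∀ᶠ i in atTop, a i < lam + 1 / (n + 1) :=
      Filter.eventually_lt_of_limsup_lt (by linarith) hbdd1
    exact (h1.and_eventually h2).mono fun i hi =>
      abs_sub_lt_iff.2 ⟨by linarith [hi.1, hi.2], by linarith [hi.1, hi.2]⟩
  obtain ⟨φ, hφmono, hφ⟩ := Filter.extraction_forall_of_frequently hfreq
  have hφlim : Tendsto (fun i => a (φ i)) atTop (𝓝 lam) := by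
    rw [← tendsto_sub_nhds_zero_iff]
    exact squeeze_zero_norm (fun i => le_of_lt (by rw [Real.norm_eq_abs]; exact hφ i))
      tendsto_one_div_add_atTop_nhds_zero_nat
  -- diagonal extraction of a full limit profile
  have hmem : ∀ i j, a (φ i - j) ∈ Set.Icc (-C) C := fun i j => Set.mem_Icc.2 (abs_le.1 (hbd _))
  set x : ℕ → (ℕ → Set.Icc (-C) C) := fun i j => ⟨a (φ i - j), hmem i j⟩ with hx
  obtain ⟨y, -, ψ, hψmono, hψ⟩ := IsCompact.tendsto_subseq isCompact_univ
    (fun i => Set.mem_univ (x i))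
  set n' : ℕ → ℕ := fun i => φ (ψ i) with hn'
  have hn'mono : StrictMono n' := hφmono.comp hψmono
  set v : ℕ → ℝ := fun j => (y j : ℝ) with hv
  have hvlim : ∀ j, Tendsto (fun i => a (n' i - j)) atTop (𝓝 (v j)) := by
    intro j
    have h1 := (tendsto_pi_nhds.1 hψ) j
    exact (continuous_subtype_val.tendsto (y j)).comp h1
  have hvbd : ∀ j, |v j| ≤ C := fun j => abs_le.2 ⟨(y j).2.1, (y j).2.2⟩
  have hta : ∀ j, Tendsto (fun i => n' i - j) atTop atTop := by
    intro j
    rw [tendsto_atTop]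
    intro b
    refine Filter.eventually_atTop.2 ⟨b + j, fun i hi => ?_⟩
    have h5 : i ≤ n' i := hn'mono.le_apply
    omega
  have hv0 : v 0 = lam := by
    have h1 : Tendsto (fun i => a (n' i - 0)) atTop (𝓝 (v 0)) := hvlim 0
    simp only [Nat.sub_zero] at h1
    have h2 : Tendsto (fun i => a (n' i)) atTop (𝓝 lam) := hφlim.comp hψmono.tendsto_atTop
    exact tendsto_nhds_unique h1 h2
  have hvle : ∀ j, v j ≤ lam := by
    intro j
    refine le_of_forall_pos_le_add fun ε hε => ?_
    have h2 : ∀ᶠ i in atTop, a i < lam + ε :=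
      Filter.eventually_lt_of_limsup_lt (by linarith) hbdd1
    have h3 : ∀ᶠ i in atTop, a (n' i - j) < lam + ε := (hta j).eventually h2
    exact le_of_tendsto (hvlim j) (h3.mono fun i hi => le_of_lt hi)
  have hqs : Summable q := hq1.summable
  have hsv : ∀ j, Summable fun s => q s * v (j + s) := by
    intro j
    apply Summable.of_norm_bounded (hqs.mul_left C)
    intro s
    rw [Real.norm_eq_abs, abs_mul, abs_of_nonneg (hqnn s)]
    calc q s * |v (j + s)| ≤ q s * C := mul_le_mul_of_nonneg_left (hvbd _) (hqnn s)
      _ = C * q s := mul_comm _ _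
  -- the profile equation
  have hveq : ∀ j, v j = ∑' s, q s * v (j + s) := by
    intro j
    have heq : ∀ i, a (n' i - j)
        = (∑ s ∈ Finset.range ((n' i - j) + 1), q s * a (n' i - j - s)) + h (n' i - j) := by
      intro i
      rw [ha (n' i - j), sum_Icc_one (f := fun s => q s * a (n' i - j - s)) (by simp [hq0]) _]
    have hlim1 : Tendsto (fun i => ∑ s ∈ Finset.range ((n' i - j) + 1), q s * a (n' i - j - s))
        atTop (𝓝 (∑' s, q s * v (j + s))) := by
      refine conv_tendsto hqnn hqs (u := fun i s => a (n' i - j - s)) (w := fun s => v (j + s))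
        (fun i s => hbd _) (fun s => ?_) (N := fun i => (n' i - j) + 1) ?_
      · have := hvlim (j + s)
        exact this.congr fun i => by simp only [Nat.sub_sub]
      · exact (tendsto_add_atTop_nat 1).comp (hta j)
    have hlim2 : Tendsto (fun i => h (n' i - j)) atTop (𝓝 0) := hh0.comp (hta j)
    have h3 := hlim1.add hlim2
    rw [add_zero] at h3
    refine tendsto_nhds_unique ((hvlim j).congr fun i => heq i) h3
  -- propagation of the maximum along the support
  have hstep : ∀ m, v m = lam → ∀ s, q s ≠ 0 → v (m + s) = lam := by
    intro m hm s hqs0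
    by_contra hne
    have hlt : v (m + s) < lam := lt_of_le_of_ne (hvle _) hne
    have hqpos : 0 < q s := lt_of_le_of_ne (hqnn s) (Ne.symm hqs0)
    set W : ℕ → ℝ := fun t => q t * (lam - v (m + t)) with hW
    have hWnn : ∀ t, 0 ≤ W t := fun t => mul_nonneg (hqnn t) (by linarith [hvle (m + t)])
    have hWs : Summable W := by
      have he : W = fun t => q t * lam - q t * v (m + t) := funext fun t => by rw [hW]; ring
      rw [he]
      exact (hqs.mul_right lam).sub (hsv m)
    have hWsum : ∑' t, W t = 0 := by
      have he : W = fun t => q t * lam - q t * v (m + t) := funext fun t => by rw [hW]; ring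
      rw [he, (hqs.mul_right lam).tsum_sub (hsv m), tsum_mul_right, hq1.tsum_eq, ← hveq m, hm]
      ring
    have hle : W s ≤ 0 := hWsum ▸ hWs.le_tsum s fun t _ => hWnn t
    have hgt : 0 < W s := by
      show 0 < q s * (lam - v (m + s))
      exact mul_pos hqpos (by linarith)
    linarith
  -- the profile equals `lam` on the closure of the support
  have hclos : ∀ j ∈ AddSubmonoid.closure {s : ℕ | q s ≠ 0},
      v j = lam ∧ ∀ m, v m = lam → v (m + j) = lam := by
    intro j hj
    induction hj using AddSubmonoid.closure_induction with
    | mem s hs =>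
        refine ⟨?_, fun m hm => hstep m hm s hs⟩
        have := hstep 0 (by simpa using hv0) s hs
        simpa using this
    | zero => exact ⟨hv0, fun m hm => by simpa using hm⟩
    | add j1 j2 _ _ h1 h2 =>
        refine ⟨?_, fun m hm => ?_⟩
        · have := h2.2 j1 h1.1
          simpa using this
        · have := h2.2 (m + j1) (h1.2 m hm)
          rwa [add_assoc] at this
  have hvN : ∀ j, N0 ≤ j → v j = lam := fun j hj => (hclos j (hsemi j hj)).1
  -- final identity along the shifted subsequence
  have hrrs : HasSum (rr q) μ := hasSum_rr hqnn hq1 hμ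
  set m' : ℕ → ℕ := fun i => n' i - N0 with hm'
  have hmlim : Tendsto m' atTop atTop := hta N0
  have hlimL : Tendsto (fun i => ∑ j ∈ Finset.range (m' i + 1), rr q j * a (m' i - j))
      atTop (𝓝 (∑' j, rr q j * lam)) := by
    refine conv_tendsto (rr_nonneg hqnn hq1) hrrs.summable (u := fun i j => a (m' i - j))
      (w := fun _ => lam) (fun i j => hbd _) (fun j => ?_) (N := fun i => m' i + 1)
      ((tendsto_add_atTop_nat 1).comp hmlim)
    have h1 := hvlim (N0 + j)
    rw [hvN (N0 + j) (Nat.le_add_right _ _)] at h1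
    exact h1.congr fun i => by simp only [hm', Nat.sub_sub]
  have hlimR : Tendsto (fun i => ∑ m ∈ Finset.range (m' i + 1), h m) atTop (𝓝 G) :=
    hH.comp hmlim
  have hfin : ∑' j, rr q j * lam = G := by
    refine tendsto_nhds_unique ?_ hlimR
    exact hlimL.congr fun i => renewal_identity hq0 ha (m' i)
  rw [← hfin, tsum_mul_right, hrrs.tsum_eq, mul_comm]

/-- The discrete renewal theorem (Erdős–Feller–Pollard). -/
private lemma renewal_main {q h a : ℕ → ℝ} {μ G : ℝ}
    (hq0 : q 0 = 0) (hqnn : ∀ s, 0 ≤ q s) (hq1 : HasSum q 1)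
    (haper : ∀ p : ℕ, 1 < p → ∃ s, ¬ p ∣ s ∧ q s ≠ 0)
    (hμ : HasSum (fun s : ℕ => (s : ℝ) * q s) μ)
    (hhnn : ∀ t, 0 ≤ h t) (hhs : HasSum h G)
    (ha : ∀ t, a t = (∑ s ∈ Finset.Icc 1 t, q s * a (t - s)) + h t) :
    Tendsto a atTop (𝓝 (G / μ)) := by
  classical
  -- nonnegativity and boundedness of `a`
  have hann : ∀ t, 0 ≤ a t := by
    intro t
    induction t using Nat.strong_induction_on with
    | _ t ih =>
      rw [ha t]
      refine add_nonneg (Finset.sum_nonneg fun s hs => ?_) (hhnn t)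
      rw [Finset.mem_Icc] at hs
      exact mul_nonneg (hqnn s) (ih _ (by omega))
  have haG : ∀ t, a t ≤ ∑ m ∈ Finset.range (t + 1), h m := by
    intro t
    induction t using Nat.strong_induction_on with
    | _ t ih =>
      rw [ha t]
      have hpt : ∀ s ∈ Finset.Icc 1 t, q s * a (t - s) ≤ q s * ∑ m ∈ Finset.range t, h m := by
        intro s hs
        rw [Finset.mem_Icc] at hs
        refine mul_le_mul_of_nonneg_left ?_ (hqnn s)
        calc a (t - s) ≤ ∑ m ∈ Finset.range ((t - s) + 1), h m := ih _ (by omega)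
          _ ≤ ∑ m ∈ Finset.range t, h m := Finset.sum_le_sum_of_subset_of_nonneg
              (Finset.range_subset_range.2 (by omega)) fun m _ _ => hhnn m
      have h1 : ∑ s ∈ Finset.Icc 1 t, q s ≤ 1 := by
        rw [sum_Icc_one hq0]
        exact sum_le_hasSum _ (fun i _ => hqnn i) hq1
      have h2 : (0:ℝ) ≤ ∑ m ∈ Finset.range t, h m := Finset.sum_nonneg fun m _ => hhnn m
      calc (∑ s ∈ Finset.Icc 1 t, q s * a (t - s)) + h t
          ≤ (∑ s ∈ Finset.Icc 1 t, q s * ∑ m ∈ Finset.range t, h m) + h t :=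
            add_le_add (Finset.sum_le_sum hpt) le_rfl
        _ = (∑ s ∈ Finset.Icc 1 t, q s) * (∑ m ∈ Finset.range t, h m) + h t := by
            rw [← Finset.sum_mul]
        _ ≤ 1 * (∑ m ∈ Finset.range t, h m) + h t := by nlinarith
        _ = ∑ m ∈ Finset.range (t + 1), h m := by rw [one_mul, Finset.sum_range_succ]
  have hG0 : 0 ≤ G := hhs.nonneg hhnn
  have hbd : ∀ t, |a t| ≤ G := by
    intro t
    rw [abs_le]
    constructor
    · linarith [hann t]
    · exact (haG t).trans (sum_le_hasSum _ (fun m _ => hhnn m) hhs)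
  -- positivity of the mean
  have hex : ∃ s, q s ≠ 0 := by
    by_contra hno
    push_neg at hno
    have h0 : HasSum q 0 := by
      have : q = fun _ => (0:ℝ) := funext hno
      rw [this]
      exact hasSum_zero
    have := hq1.unique h0
    norm_num at this
  obtain ⟨s0, hs0⟩ := hex
  have hs0' : 1 ≤ s0 := by
    rcases Nat.eq_zero_or_pos s0 with h' | h'
    · exact absurd (h' ▸ hq0) hs0
    · omega
  have hμpos : 0 < μ := by
    have h1 : (s0:ℝ) * q s0 ≤ μ :=
      le_hasSum hμ s0 fun s _ => mul_nonneg (Nat.cast_nonneg _) (hqnn s)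
    have h2 : 0 < (s0:ℝ) * q s0 :=
      mul_pos (by exact_mod_cast hs0') (lt_of_le_of_ne (hqnn s0) (Ne.symm hs0))
    linarith
  -- the semigroup of the support is cofinite
  obtain ⟨N0, hsemi⟩ : ∃ N0, ∀ n, N0 ≤ n → n ∈ AddSubmonoid.closure {s : ℕ | q s ≠ 0} := by
    apply semigroup_cofinite
    · exact ⟨s0, hs0, by omega⟩
    · intro p hp
      obtain ⟨s, h1, h2⟩ := haper p hp
      exact ⟨s, h2, h1⟩
  have hbdd1 : IsBoundedUnder (· ≤ ·) atTop a :=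
    ⟨G, Filter.eventually_map.2 (Filter.Eventually.of_forall fun t => (abs_le.1 (hbd t)).2)⟩
  have hbdd2 : IsBoundedUnder (· ≥ ·) atTop a :=
    ⟨-G, Filter.eventually_map.2 (Filter.Eventually.of_forall fun t => (abs_le.1 (hbd t)).1)⟩
  -- limsup
  have hup : μ * limsup a atTop = G :=
    peak hq0 hqnn hq1 hμ hsemi hbd ha hhs.summable.tendsto_atTop_zero
      (hhs.tendsto_sum_nat.comp (tendsto_add_atTop_nat 1))
  -- liminf, via the reflected sequence `G - a`
  have hrr : HasSum (rr q) μ := hasSum_rr hqnn hq1 hμ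
  have haa : ∀ t, (G - a t)
      = (∑ s ∈ Finset.Icc 1 t, q s * (G - a (t - s))) + (G * rr q t - h t) := by
    intro t
    have e1 : ∑ s ∈ Finset.Icc 1 t, q s * (G - a (t - s))
        = (∑ s ∈ Finset.Icc 1 t, q s) * G - ∑ s ∈ Finset.Icc 1 t, q s * a (t - s) := by
      rw [Finset.sum_mul, ← Finset.sum_sub_distrib]
      exact Finset.sum_congr rfl fun s _ => by ring
    have e2 : (∑ s ∈ Finset.Icc 1 t, q s) = 1 - rr q t := by
      rw [sum_Icc_one hq0]
      simp [rr]
    have e3 := ha t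
    have e4 : (1 - rr q t) * G = G - G * rr q t := by ring
    rw [e1, e2, e4]
    linarith
  have hbd' : ∀ t, |G - a t| ≤ G := by
    intro t
    rw [abs_le]
    have := (haG t).trans (sum_le_hasSum _ (fun m _ => hhnn m) hhs)
    constructor <;> linarith [hann t]
  have hh0' : Tendsto (fun t => G * rr q t - h t) atTop (𝓝 0) := by
    have h1 : Tendsto (fun t => G * rr q t) atTop (𝓝 0) := by
      simpa using (hrr.summable.tendsto_atTop_zero.const_mul G)
    simpa using h1.sub hhs.summable.tendsto_atTop_zero
  have hH' : Tendsto (fun n => ∑ m ∈ Finset.range (n + 1), (G * rr q m - h m)) atTop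
      (𝓝 (G * μ - G)) := by
    have h1 : Tendsto (fun n => G * ∑ m ∈ Finset.range (n + 1), rr q m) atTop (𝓝 (G * μ)) :=
      (hrr.tendsto_sum_nat.comp (tendsto_add_atTop_nat 1)).const_mul G
    have h2 : Tendsto (fun n => ∑ m ∈ Finset.range (n + 1), h m) atTop (𝓝 G) :=
      hhs.tendsto_sum_nat.comp (tendsto_add_atTop_nat 1)
    have h3 := h1.sub h2
    refine h3.congr fun n => ?_
    rw [Finset.mul_sum, ← Finset.sum_sub_distrib]
  have hdown : μ * limsup (fun t => G - a t) atTop = G * μ - G :=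
    peak hq0 hqnn hq1 hμ hsemi hbd' haa hh0' hH'
  have hflip : limsup (fun t => G - a t) atTop = G - liminf a atTop :=
    limsup_const_sub atTop a G hbdd1.isCoboundedUnder_flip hbdd2
  have hinf : μ * liminf a atTop = G := by
    rw [hflip] at hdown
    nlinarith
  have hls : limsup a atTop = G / μ := by field_simp; linarith
  have hli : liminf a atTop = G / μ := by field_simp; linarith
  exact tendsto_of_liminf_eq_limsup hli hls hbdd1 hbdd2

/-- Feller's Renewal Theorem, part (iii): supercritical case `ℛ₀ > 1`. -/
theorem feller_renewal_supercritical
    (k g b : ℕ → ℝ) (ρ : ℝ)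
    -- kernel assumptions
    (hk0 : k 0 = 0)
    (hA1 : ∀ t, 0 ≤ k t) (hA1' : ∃ t, 0 < k t)
    (hA2 : Summable k)
    -- (A3) aperiodicity
    (hA3 : ¬ ∃ p : ℕ, 1 < p ∧ ∀ s : ℕ, ¬ p ∣ s → k s = 0)
    -- forcing assumptions
    (hg : ∀ t, 0 ≤ g t) (hgsum : Summable g)
    -- the renewal equation
    (hb : ∀ t : ℕ, b t = (∑ s ∈ Finset.Icc 1 t, k s * b (t - s)) + g t)
    -- supercriticality: ℛ₀ = ∑_{t=1}^∞ k t > 1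
    (hR0 : 1 < ∑' t : ℕ, k t)
    -- ρ > 1 solves the Euler–Lotka equation ∑_{s=1}^∞ k(s) ρ⁻ˢ = 1
    (hρ : 1 < ρ) (hEL : HasSum (fun s : ℕ => k s * ρ⁻¹ ^ s) 1) :
    Tendsto (fun t : ℕ => ρ⁻¹ ^ t * b t) atTop
      (𝓝 ((∑' s : ℕ, g s * ρ⁻¹ ^ s) / ∑' s : ℕ, (s : ℝ) * k s * ρ⁻¹ ^ s)) := by
  have hρ0 : 0 < ρ := lt_trans one_pos hρ
  have hx0 : 0 < ρ⁻¹ := inv_pos.2 hρ0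
  have hx1 : ρ⁻¹ < 1 := inv_lt_one_of_one_lt₀ hρ
  set q : ℕ → ℝ := fun s => k s * ρ⁻¹ ^ s with hq
  set h : ℕ → ℝ := fun t => g t * ρ⁻¹ ^ t with hh
  set a : ℕ → ℝ := fun t => ρ⁻¹ ^ t * b t with ha'
  have hq0 : q 0 = 0 := by simp [hq, hk0]
  have hqnn : ∀ s, 0 ≤ q s := fun s => mul_nonneg (hA1 s) (pow_nonneg (le_of_lt hx0) s)
  have haper : ∀ p : ℕ, 1 < p → ∃ s, ¬ p ∣ s ∧ q s ≠ 0 := by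
    intro p hp
    push_neg at hA3
    obtain ⟨s, hs1, hs2⟩ := hA3 p hp
    exact ⟨s, hs1, mul_ne_zero hs2 (pow_ne_zero s (ne_of_gt hx0))⟩
  -- summability of `s ↦ s q s`
  have hμs : Summable fun s : ℕ => (s : ℝ) * k s * ρ⁻¹ ^ s := by
    set K := ∑' t, k t with hK
    have hkb : ∀ s, k s ≤ K := fun s => hA2.le_tsum s fun t _ => hA1 t
    have hK0 : 0 ≤ K := tsum_nonneg hA1
    have hgeo : Summable fun s : ℕ => K * ((s : ℝ) ^ 1 * ρ⁻¹ ^ s) :=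
      (summable_pow_mul_geometric_of_norm_lt_one 1
        (by rw [Real.norm_eq_abs, abs_of_pos hx0]; exact hx1)).mul_left K
    refine Summable.of_nonneg_of_le (fun s => ?_) (fun s => ?_) hgeo
    · exact mul_nonneg (mul_nonneg (Nat.cast_nonneg _) (hA1 s)) (pow_nonneg (le_of_lt hx0) s)
    · have h1 : (s : ℝ) * k s * ρ⁻¹ ^ s ≤ (s : ℝ) * K * ρ⁻¹ ^ s := by
        exact mul_le_mul_of_nonneg_right
          (mul_le_mul_of_nonneg_left (hkb s) (Nat.cast_nonneg _))
          (pow_nonneg (le_of_lt hx0) s)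
      calc (s : ℝ) * k s * ρ⁻¹ ^ s ≤ (s : ℝ) * K * ρ⁻¹ ^ s := h1
        _ = K * ((s : ℝ) ^ 1 * ρ⁻¹ ^ s) := by ring
  have hμ : HasSum (fun s : ℕ => (s : ℝ) * q s) (∑' s : ℕ, (s : ℝ) * k s * ρ⁻¹ ^ s) := by
    have e : (fun s : ℕ => (s : ℝ) * q s) = fun s : ℕ => (s : ℝ) * k s * ρ⁻¹ ^ s :=
      funext fun s => by rw [hq, mul_assoc]
    rw [e]
    exact hμs.hasSum
  -- forcing
  have hhnn : ∀ t, 0 ≤ h t := fun t => mul_nonneg (hg t) (pow_nonneg (le_of_lt hx0) t)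
  have hhsum : Summable h := by
    refine Summable.of_nonneg_of_le hhnn (fun t => ?_) hgsum
    calc g t * ρ⁻¹ ^ t ≤ g t * 1 :=
          mul_le_mul_of_nonneg_left (pow_le_one₀ (le_of_lt hx0) (le_of_lt hx1)) (hg t)
      _ = g t := mul_one _
  have hhs : HasSum h (∑' s : ℕ, g s * ρ⁻¹ ^ s) := hhsum.hasSum
  -- the rescaled renewal equation
  have hra : ∀ t, a t = (∑ s ∈ Finset.Icc 1 t, q s * a (t - s)) + h t := by
    intro t
    show ρ⁻¹ ^ t * b t = _
    rw [hb t, mul_add, Finset.mul_sum]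
    refine congrArg₂ (· + ·) ?_ (mul_comm _ _)
    refine Finset.sum_congr rfl fun s hs => ?_
    rw [Finset.mem_Icc] at hs
    have e : ρ⁻¹ ^ t = ρ⁻¹ ^ s * ρ⁻¹ ^ (t - s) := by
      rw [← pow_add]
      congr 1
      omega
    rw [e]
    show ρ⁻¹ ^ s * ρ⁻¹ ^ (t - s) * (k s * b (t - s)) = k s * ρ⁻¹ ^ s * (ρ⁻¹ ^ (t - s) * b (t - s))
    ring
  exact renewal_main hq0 hqnn hEL haper hμ hhnn hhs hra
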